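/- arXiv:1605.03234 — 3 statements merged into one kernel-verified Lean document; each statement's English description precedes it below -/
import Mathlib

section
/- Let ψ(x) = (1/sqrt(2π))·exp(-x²/2). For all x ∈ (0,1] and τ > 0, ψ(τx)/(τx) ≤ (1/sqrt(2π))·(1 - x²)/(τx) + x·ψ(τ)/τ. -/
open Real

theorem stmt_2 (ψ : ℝ → ℝ)
    (hψ : ∀ x : ℝ, ψ x = (1 / Real.sqrt (2 * π)) * Real.exp (-x ^ 2 / 2))
    (x τ : ℝ) (hx0 : 0 < x) (hx1 : x ≤ 1) (hτ : 0 < τ) :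
    ψ (τ * x) / (τ * x) ≤
      (1 / Real.sqrt (2 * π)) * (1 - x ^ 2) / (τ * x) + x * (ψ τ / τ) := by
  rw [hψ, hψ]
  set A : ℝ := 1 / Real.sqrt (2 * π) with hA
  have hApos : 0 < A := by
    rw [hA]
    positivity
  have hτx : 0 < τ * x := mul_pos hτ hx0
  have hx2 : (0:ℝ) ≤ 1 - x ^ 2 := by nlinarith
  have key : Real.exp (-(τ * x) ^ 2 / 2) ≤ (1 - x ^ 2) + x ^ 2 * Real.exp (-τ ^ 2 / 2) := by
    have h := convexOn_exp.2 (Set.mem_univ (0:ℝ)) (Set.mem_univ (-τ ^ 2 / 2)) hx2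
      (by positivity : (0:ℝ) ≤ x ^ 2) (by ring)
    have heq : (1 - x ^ 2) • (0:ℝ) + x ^ 2 • (-τ ^ 2 / 2) = -(τ * x) ^ 2 / 2 := by
      simp [smul_eq_mul]; ring
    rw [heq] at h
    simpa [smul_eq_mul] using h
  have hrw : x * (A * Real.exp (-τ ^ 2 / 2) / τ) =
      (x ^ 2 * (A * Real.exp (-τ ^ 2 / 2))) / (τ * x) := by
    field_simp
  rw [hrw, ← add_div]
  gcongr
  nlinarith [key, hApos]
end

section
/- Let w_0, …, w_J be positive reals, z_0 ≤ z_1 ≤ … ≤ z_J reals, x a real number, λ, L > 0, and l ∈ {-1, 0, …, J} (with the conventions z_{-1} = -∞, z_{J+1} = +∞). Define s_l = ∑_{j=0}^J w_j·σ_{l,j} where σ_{l,j} = -1 if l < j and σ_{l,j} = +1 otherwise. If z_l + (λ/L)·s_l < x < z_{l+1} + (λ/L)·s_l, then the unique minimizer of h(v) = (λ/L)·∑_{j=0}^J w_j·|v - z_j| + (1/2)·(v - x)² is v* = x - (λ/L)·s_l, and moreover z_l < v* < z_{l+1}. -/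
open Finset

theorem stmt_12 (J : ℕ) (w z : ℤ → ℝ)
    (hw : ∀ j ∈ Finset.Icc (0 : ℤ) J, 0 < w j)
    (hz : ∀ i j : ℤ, 0 ≤ i → i ≤ j → j ≤ J → z i ≤ z j)
    (x lam L : ℝ) (hlam : 0 < lam) (hL : 0 < L)
    (l : ℤ) (hl0 : -1 ≤ l) (hlJ : l ≤ J)
    (s : ℝ)
    (hs : s = ∑ j ∈ Finset.Icc (0 : ℤ) J, w j * (if l < j then (-1 : ℝ) else 1))
    (hleft : 0 ≤ l → z l + (lam / L) * s < x)
    (hright : l < J → x < z (l + 1) + (lam / L) * s) :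
    (∀ v : ℝ, v ≠ x - (lam / L) * s →
      (lam / L) * ∑ j ∈ Finset.Icc (0 : ℤ) J, w j * |(x - (lam / L) * s) - z j| +
        (1 / 2) * ((x - (lam / L) * s) - x) ^ 2 <
      (lam / L) * ∑ j ∈ Finset.Icc (0 : ℤ) J, w j * |v - z j| +
        (1 / 2) * (v - x) ^ 2) ∧
    (0 ≤ l → z l < x - (lam / L) * s) ∧
    (l < J → x - (lam / L) * s < z (l + 1)) := by
  have hc : 0 < lam / L := div_pos hlam hL
  set c := lam / L with hc_def
  set vs := x - c * s with hvs
  have hbl : 0 ≤ l → z l < vs := by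
    intro h; have := hleft h; rw [hvs]; linarith
  have hbr : l < J → vs < z (l + 1) := by
    intro h; have := hright h; rw [hvs]; linarith
  set A := ∑ j ∈ Finset.Icc (0 : ℤ) J, w j * ((if l < j then (-1 : ℝ) else 1) * z j) with hA
  have hsum_ge : ∀ v : ℝ,
      s * v - A ≤ ∑ j ∈ Finset.Icc (0 : ℤ) J, w j * |v - z j| := by
    intro v
    have : s * v - A = ∑ j ∈ Finset.Icc (0 : ℤ) J,
        w j * ((if l < j then (-1 : ℝ) else 1) * (v - z j)) := by
      rw [hs, hA, Finset.sum_mul, ← Finset.sum_sub_distrib]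
      exact Finset.sum_congr rfl (fun j hj => by ring)
    rw [this]
    apply Finset.sum_le_sum
    intro j hj
    have hwj := (hw j hj).le
    by_cases hlj : l < j
    · simp only [if_pos hlj]
      nlinarith [neg_abs_le (v - z j), abs_nonneg (v - z j)]
    · simp only [if_neg hlj]
      nlinarith [le_abs_self (v - z j), abs_nonneg (v - z j)]
  have hsum_eq : ∑ j ∈ Finset.Icc (0 : ℤ) J, w j * |vs - z j| = s * vs - A := by
    have h1 : ∀ j ∈ Finset.Icc (0 : ℤ) J,
        w j * |vs - z j| = w j * ((if l < j then (-1 : ℝ) else 1) * (vs - z j)) := by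
      intro j hj
      simp only [Finset.mem_Icc] at hj
      by_cases hlj : l < j
      · have h1 : l < (J : ℤ) := lt_of_lt_of_le hlj hj.2
        have h2 : z (l + 1) ≤ z j := hz (l + 1) j (by linarith) (by linarith) hj.2
        have h3 : vs < z j := lt_of_lt_of_le (hbr h1) h2
        rw [if_pos hlj, abs_of_neg (by linarith)]; ring
      · push_neg at hlj
        have h0 : 0 ≤ l := le_trans hj.1 hlj
        have h2 : z j ≤ z l := hz j l hj.1 hlj hlJ
        have h3 : z j < vs := lt_of_le_of_lt h2 (hbl h0)
        rw [if_neg (not_lt.mpr hlj), abs_of_pos (by linarith)]; ring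
    rw [Finset.sum_congr rfl h1, hs, hA, Finset.sum_mul, ← Finset.sum_sub_distrib]
    exact Finset.sum_congr rfl (fun j hj => by ring)
  refine ⟨?_, hbl, hbr⟩
  intro v hv
  have h1 := hsum_ge v
  have hd2 : 0 < (v - vs) ^ 2 := by
    have : v - vs ≠ 0 := sub_ne_zero.mpr hv
    positivity
  have h2 := mul_le_mul_of_nonneg_left h1 hc.le
  rw [hsum_eq]
  have key : c * (s * v - A) + 1 / 2 * (v - x) ^ 2 =
      c * (s * vs - A) + 1 / 2 * (vs - x) ^ 2 + 1 / 2 * (v - vs) ^ 2 := by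
    rw [hvs]; ring
  clear_value c vs A
  linarith [h2, hd2, key]
end

section
/- Let w_0, …, w_J > 0 with ∑_{j=0}^J w_j = 1, λ, L > 0, reals z_0 ≤ … ≤ z_J, x ∈ ℝ, and l ∈ {0,…,J} with |x - z_l| ≤ λ/L. Then for all v ∈ ℝ: (λ/L)·∑_{j=0}^J w_j·|v - z_j| + (1/2)(v - x)² ≥ |v - z_l|·(λ/L - |x - z_l|) + (1/2)(v - z_l)² - (λ/L)·∑_{j=0}^J w_j·|z_j - z_l| + (1/2)(x - z_l)². -/
open Finset

theorem stmt_13 (J : ℕ) (w z : Fin (J + 1) → ℝ)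
    (hw : ∀ j, 0 < w j) (hwsum : ∑ j, w j = 1)
    (hz : Monotone z)
    (x lam L : ℝ) (hlam : 0 < lam) (hL : 0 < L)
    (l : Fin (J + 1)) (hl : |x - z l| ≤ lam / L) :
    ∀ v : ℝ,
      (lam / L) * ∑ j, w j * |v - z j| + (1 / 2) * (v - x) ^ 2 ≥
        |v - z l| * (lam / L - |x - z l|) + (1 / 2) * (v - z l) ^ 2 -
          (lam / L) * ∑ j, w j * |z j - z l| + (1 / 2) * (x - z l) ^ 2 := by
  intro v
  have hlL : 0 ≤ lam / L := le_of_lt (div_pos hlam hL)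
  have h1 : ∑ j, w j * (|v - z l| - |z j - z l|) ≤ ∑ j, w j * |v - z j| := by
    apply Finset.sum_le_sum
    intro j _
    have h := abs_sub_abs_le_abs_sub (v - z l) (z j - z l)
    have h' : v - z l - (z j - z l) = v - z j := by ring
    rw [h'] at h
    exact mul_le_mul_of_nonneg_left h (hw j).le
  have h2 : ∑ j, w j * (|v - z l| - |z j - z l|)
      = |v - z l| - ∑ j, w j * |z j - z l| := by
    simp only [mul_sub]
    rw [Finset.sum_sub_distrib, ← Finset.sum_mul, hwsum, one_mul]
  rw [h2] at h1
  have h3 : (v - z l) * (x - z l) ≤ |v - z l| * |x - z l| := by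
    have := le_abs_self ((v - z l) * (x - z l))
    rwa [abs_mul] at this
  have h4 : lam / L * (|v - z l| - ∑ j, w j * |z j - z l|) ≤
      lam / L * ∑ j, w j * |v - z j| := mul_le_mul_of_nonneg_left h1 hlL
  nlinarith [sq_nonneg (v - x), sq_nonneg (v - z l)]
end
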